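/- Let ω, J : ℝ → ℝ be functions, and let α ≠ 0, β, α̇, β̇ be real numbers. Write w = β/α, u = α² + β², and suppose D = 2 J(w) + α² ω(u) ≠ 0 and that the Hamiltonian constraint (1/2)(α̇² + β̇²) + (1/2) ω(u) + α^{−2} J(w) = 0 holds. Then the quadratic quantity Q₁ = (2(α α̇ + β β̇)² J(w) − α² (α̇ β − α β̇)² ω(u)) / D equals −2 I, where I = (1/2)(α̇ β − α β̇)² + ((α² + β²)/α²) J(w) is the Ray–Reid invariant. -/

import Mathlib

/-- On the constraint surface of the Ermakov–Ray–Reid system, with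
`w = β/α`, `u = α² + β²` and `D = 2J(w) + α²ω(u) ≠ 0`, the quadratic quantity
`Q₁ = (2(αα̇ + ββ̇)² J(w) − α²(α̇β − αβ̇)² ω(u)) / D` equals `−2I`, where
`I = (1/2)(α̇β − αβ̇)² + ((α²+β²)/α²) J(w)` is the Ray–Reid invariant. -/
theorem Q1_eq_neg_two_ray_reid_invariant (ω J : ℝ → ℝ) (α β α' β' : ℝ)
    (hα : α ≠ 0)
    (hD : 2 * J (β / α) + α^2 * ω (α^2 + β^2) ≠ 0)
    -- Hamiltonian constraint
    (hconstraint : (1/2) * (α'^2 + β'^2) + (1/2) * ω (α^2 + β^2)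
        + (α^2)⁻¹ * J (β / α) = 0) :
    (2 * (α * α' + β * β')^2 * J (β / α) - α^2 * (α' * β - α * β')^2 * ω (α^2 + β^2))
        / (2 * J (β / α) + α^2 * ω (α^2 + β^2)) =
      -2 * ((1/2) * (α' * β - α * β')^2 + ((α^2 + β^2) / α^2) * J (β / α)) := by
  rw [div_eq_iff hD]
  have h2 : α^2 ≠ 0 := pow_ne_zero 2 hα
  field_simp at hconstraint ⊢
  linear_combination (2 * J (β / α) * (α^2 + β^2)) * hconstraint
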